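/- Johnson–Lindenstrauss Lemma: let 0 < ε < 1/2 and let S ⊆ ℝ^m be a finite set with |S| = n. If m' ≥ C·ln(n)/ε² for a sufficiently large absolute constant C, then there exists a linear map T : ℝ^m → ℝ^{m'} such that (1−ε)‖x − y‖₂ ≤ ‖T(x) − T(y)‖₂ ≤ (1+ε)‖x − y‖₂ for all x, y ∈ S. -/

import Mathlib

open Real Finset MeasureTheory

set_option maxHeartbeats 1000000
set_option linter.deprecated false

namespace JL

def sgn (b : Bool) : ℝ := if b then 1 else -1

lemma sgn_sq (b : Bool) : sgn b ^ 2 = 1 := by cases b <;> simp [sgn]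

lemma sum_pi_prod {ι κ : Type*} [Fintype ι] [DecidableEq ι] [Fintype κ] (g : ι → κ → ℝ) :
    ∑ r : ι → κ, ∏ i, g i (r i) = ∏ i, ∑ b, g i b :=
  (Fintype.prod_sum (fun i (b : κ) => g i b)).symm

lemma integrable_exp_lin_quad (c : ℝ) :
    Integrable (fun x : ℝ => exp (c * x - x ^ 2 / 2)) := by
  have h : ∀ x : ℝ, c * x - x ^ 2 / 2 = -((1:ℝ)/2) * (x - c) ^ 2 + c ^ 2 / 2 := by
    intro x; ring
  simp_rw [h, Real.exp_add]
  exact ((integrable_exp_neg_mul_sq (by norm_num : (0:ℝ) < 1/2)).comp_sub_right c).mul_const _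

lemma integral_exp_lin_quad (c : ℝ) :
    ∫ x : ℝ, exp (c * x - x ^ 2 / 2) = Real.sqrt (2 * π) * exp (c ^ 2 / 2) := by
  have h : ∀ x : ℝ, c * x - x ^ 2 / 2 = -((1:ℝ)/2) * (x - c) ^ 2 + c ^ 2 / 2 := by
    intro x; ring
  simp_rw [h, Real.exp_add, integral_mul_const]
  rw [integral_sub_right_eq_self (fun x : ℝ => exp (-((1:ℝ)/2) * x ^ 2)) c]
  rw [integral_gaussian]
  rw [show π / (1/2 : ℝ) = 2 * π by ring]


variable {m : ℕ}

/-- signed sum -/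
def rs (v : Fin m → ℝ) (r : Fin m → Bool) : ℝ := ∑ j, sgn (r j) * v j

/-- Hoeffding-type bound for the Rademacher sum MGF. -/
lemma sum_exp_lin (v : Fin m → ℝ) (hv : ∑ j, v j ^ 2 = 1) (c : ℝ) :
    ∑ r : Fin m → Bool, exp (c * rs v r) ≤ 2 ^ m * exp (c ^ 2 / 2) := by
  have h1 : ∀ r : Fin m → Bool, exp (c * rs v r) = ∏ j, exp (c * (sgn (r j) * v j)) := by
    intro r
    rw [← Real.exp_sum, rs, Finset.mul_sum]
  calc ∑ r : Fin m → Bool, exp (c * rs v r)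
      = ∑ r : Fin m → Bool, ∏ j, exp (c * (sgn (r j) * v j)) := by
        exact Finset.sum_congr rfl fun r _ => h1 r
    _ = ∏ j, ∑ b : Bool, exp (c * (sgn b * v j)) := sum_pi_prod (fun j b => exp (c * (sgn b * v j)))
    _ = ∏ j, 2 * Real.cosh (c * v j) := by
        refine Finset.prod_congr rfl fun j _ => ?_
        rw [Fintype.sum_bool, Real.cosh_eq]
        simp [sgn]
        ring
    _ ≤ ∏ j, 2 * exp ((c * v j) ^ 2 / 2) := by
        refine Finset.prod_le_prod (fun j _ => by positivity) fun j _ => ?_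
        have := Real.cosh_le_exp_half_sq (c * v j)
        linarith
    _ = 2 ^ m * exp (c ^ 2 / 2) := by
        rw [Finset.prod_mul_distrib, Finset.prod_const, ← Real.exp_sum]
        simp only [card_univ, Fintype.card_fin]
        congr 1
        have h2 : ∑ x : Fin m, (c * v x) ^ 2 / 2 = c ^ 2 / 2 * ∑ x, v x ^ 2 := by
          rw [Finset.mul_sum]
          exact Finset.sum_congr rfl fun j _ => by ring
        rw [h2, hv, mul_one]


lemma sum_exp_sq (v : Fin m → ℝ) (hv : ∑ j, v j ^ 2 = 1) {l : ℝ} (hl0 : 0 ≤ l) (hl : l < 1/2) :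
    ∑ r : Fin m → Bool, exp (l * (rs v r) ^ 2) ≤ 2 ^ m * Real.sqrt (1 / (1 - 2 * l)) := by
  have h3 : (0:ℝ) < 1 - 2 * l := by linarith
  have h4 : (0:ℝ) < 1/2 - l := by linarith
  have hkey : ∀ t : ℝ, exp (l * t ^ 2)
      = (Real.sqrt (2 * π))⁻¹ * ∫ x : ℝ, exp ((Real.sqrt (2 * l) * t) * x - x ^ 2 / 2) := by
    intro t
    rw [integral_exp_lin_quad]
    have h2 : (Real.sqrt (2 * l) * t) ^ 2 / 2 = l * t ^ 2 := by
      rw [mul_pow, Real.sq_sqrt (by linarith)]; ring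
    rw [h2, ← mul_assoc, inv_mul_cancel₀ (by positivity), one_mul]
  calc ∑ r : Fin m → Bool, exp (l * (rs v r) ^ 2)
      = (Real.sqrt (2 * π))⁻¹ *
        ∑ r : Fin m → Bool, ∫ x : ℝ, exp ((Real.sqrt (2 * l) * rs v r) * x - x ^ 2 / 2) := by
        rw [Finset.mul_sum]; exact Finset.sum_congr rfl fun r _ => hkey (rs v r)
    _ = (Real.sqrt (2 * π))⁻¹ *
        ∫ x : ℝ, ∑ r : Fin m → Bool, exp ((Real.sqrt (2 * l) * rs v r) * x - x ^ 2 / 2) := by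
        rw [integral_finset_sum _ (fun r _ => integrable_exp_lin_quad _)]
    _ ≤ (Real.sqrt (2 * π))⁻¹ * ∫ x : ℝ, (2:ℝ) ^ m * exp (-(1/2 - l) * x ^ 2) := by
        refine mul_le_mul_of_nonneg_left ?_ (by positivity)
        refine integral_mono (integrable_finset_sum _ fun r _ => integrable_exp_lin_quad _)
          ((integrable_exp_neg_mul_sq h4).const_mul _) ?_
        intro x
        have hpt : ∑ r : Fin m → Bool, exp ((Real.sqrt (2*l) * rs v r) * x - x^2/2)
            = (∑ r : Fin m → Bool, exp ((Real.sqrt (2*l) * x) * rs v r)) * exp (-(x^2/2)) := by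
          rw [Finset.sum_mul]
          refine Finset.sum_congr rfl fun r _ => ?_
          rw [← Real.exp_add]; congr 1; ring
        show ∑ r : Fin m → Bool, exp ((Real.sqrt (2*l) * rs v r) * x - x^2/2)
            ≤ (2:ℝ) ^ m * exp (-(1/2 - l) * x ^ 2)
        rw [hpt]
        calc (∑ r : Fin m → Bool, exp ((Real.sqrt (2*l) * x) * rs v r)) * exp (-(x^2/2))
            ≤ (2 ^ m * exp ((Real.sqrt (2*l) * x) ^ 2 / 2)) * exp (-(x^2/2)) :=
              mul_le_mul_of_nonneg_right (sum_exp_lin v hv _) (Real.exp_pos _).le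
          _ = 2 ^ m * exp (-(1/2 - l) * x ^ 2) := by
              rw [mul_assoc, ← Real.exp_add, mul_pow, Real.sq_sqrt (by linarith : (0:ℝ) ≤ 2*l)]
              congr 2
              ring
    _ = (Real.sqrt (2 * π))⁻¹ * (2 ^ m * Real.sqrt (π / (1/2 - l))) := by
        rw [MeasureTheory.integral_const_mul, integral_gaussian]
    _ = 2 ^ m * Real.sqrt (1 / (1 - 2 * l)) := by
        have h5 : Real.sqrt (1/(1-2*l)) = Real.sqrt (π/(1/2-l)) / Real.sqrt (2*π) := by
          rw [← Real.sqrt_div (by positivity)]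
          congr 1
          field_simp
        rw [h5]
        field_simp


/-- convert the sqrt bound into an exp bound -/
lemma sqrt_le_exp {l : ℝ} (hl0 : 0 ≤ l) (hl : l ≤ 1/8) :
    Real.sqrt (1 / (1 - 2 * l)) ≤ exp (l + 4 * l ^ 2) := by
  have h3 : (0:ℝ) < 1 - 2 * l := by linarith
  have h1 : 1 / (1 - 2 * l) ≤ exp (2 * l + 8 * l ^ 2) := by
    rw [div_le_iff₀ h3]
    nlinarith [Real.add_one_le_exp (2 * l + 8 * l ^ 2), sq_nonneg l]
  calc Real.sqrt (1 / (1 - 2 * l)) ≤ Real.sqrt (exp (2 * l + 8 * l ^ 2)) :=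
        Real.sqrt_le_sqrt h1
    _ = exp (l + 4 * l ^ 2) := by
        rw [show 2 * l + 8 * l ^ 2 = (l + 4 * l ^ 2) + (l + 4 * l ^ 2) by ring, Real.exp_add,
          Real.sqrt_mul_self (Real.exp_pos _).le]

/-- upper MGF bound -/
lemma mgf_up (v : Fin m → ℝ) (hv : ∑ j, v j ^ 2 = 1) {l : ℝ} (hl0 : 0 ≤ l) (hl : l ≤ 1/8) :
    ∑ r : Fin m → Bool, exp (l * (rs v r) ^ 2) ≤ 2 ^ m * exp (l + 4 * l ^ 2) :=
  le_trans (sum_exp_sq v hv hl0 (by linarith)) <| by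
    have := sqrt_le_exp hl0 hl
    have h2 : (0:ℝ) ≤ 2 ^ m := by positivity
    nlinarith [Real.sqrt_nonneg (1 / (1 - 2 * l))]

/-- first moment: E Y = ‖v‖² -/
lemma sum_sq (v : Fin m → ℝ) :
    ∑ r : Fin m → Bool, (rs v r) ^ 2 = 2 ^ m * ∑ j, v j ^ 2 := by
  have key : ∀ j k : Fin m, ∑ r : Fin m → Bool, sgn (r j) * sgn (r k)
      = if j = k then (2:ℝ) ^ m else 0 := by
    intro j k
    by_cases hjk : j = k
    · subst hjk
      simp only [if_pos rfl]
      have : ∀ r : Fin m → Bool, sgn (r j) * sgn (r j) = 1 := by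
        intro r; have := sgn_sq (r j); nlinarith
      rw [Finset.sum_congr rfl fun r _ => this r, Finset.sum_const, card_univ]
      simp [Fintype.card_fun]
    · rw [if_neg hjk]
      have hrw : ∀ r : Fin m → Bool, sgn (r j) * sgn (r k)
          = ∏ i, ((if i = j then sgn (r i) else 1) * (if i = k then sgn (r i) else 1)) := by
        intro r
        rw [Finset.prod_mul_distrib, Finset.prod_ite_eq', Finset.prod_ite_eq']
        simp [Finset.mem_univ]
      rw [Finset.sum_congr rfl fun r _ => hrw r,
        sum_pi_prod (fun i b => (if i = j then sgn b else 1) * (if i = k then sgn b else 1))]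
      refine Finset.prod_eq_zero (Finset.mem_univ j) ?_
      simp [Fintype.sum_bool, hjk, sgn]
  have expand : ∀ r : Fin m → Bool, (rs v r) ^ 2
      = ∑ j, ∑ k, (sgn (r j) * sgn (r k)) * (v j * v k) := by
    intro r
    rw [rs, sq, Finset.sum_mul_sum]
    exact Finset.sum_congr rfl fun j _ => Finset.sum_congr rfl fun k _ => by ring
  calc ∑ r : Fin m → Bool, (rs v r) ^ 2
      = ∑ r : Fin m → Bool, ∑ j, ∑ k, (sgn (r j) * sgn (r k)) * (v j * v k) :=
        Finset.sum_congr rfl fun r _ => expand r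
    _ = ∑ j, ∑ k, ∑ r : Fin m → Bool, (sgn (r j) * sgn (r k)) * (v j * v k) := by
        rw [Finset.sum_comm]
        exact Finset.sum_congr rfl fun j _ => Finset.sum_comm
    _ = ∑ j, ∑ k, (∑ r : Fin m → Bool, sgn (r j) * sgn (r k)) * (v j * v k) := by
        refine Finset.sum_congr rfl fun j _ => Finset.sum_congr rfl fun k _ => ?_
        rw [Finset.sum_mul]
    _ = ∑ j, ∑ k, (if j = k then (2:ℝ) ^ m else 0) * (v j * v k) := by
        refine Finset.sum_congr rfl fun j _ => Finset.sum_congr rfl fun k _ => ?_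
        rw [key j k]
    _ = ∑ j, (2:ℝ) ^ m * (v j * v j) := by
        refine Finset.sum_congr rfl fun j _ => ?_
        simp only [ite_mul, zero_mul]
        rw [Finset.sum_ite_eq]
        simp
    _ = 2 ^ m * ∑ j, v j ^ 2 := by
        rw [Finset.mul_sum]
        exact Finset.sum_congr rfl fun j _ => by ring

/-- fourth moment bound -/
lemma sum_fourth (v : Fin m → ℝ) (hv : ∑ j, v j ^ 2 = 1) :
    ∑ r : Fin m → Bool, (rs v r) ^ 4 ≤ 300 * 2 ^ m := by
  have hpt : ∀ r : Fin m → Bool, (rs v r) ^ 4 ≤ 256 * exp ((1/8) * (rs v r) ^ 2) := by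
    intro r
    set y := (rs v r) ^ 2 with hy
    have hy0 : 0 ≤ y := sq_nonneg _
    have h1 := Real.add_one_le_exp (y / 16)
    have h2 : exp ((1/8) * y) = exp (y / 16) * exp (y / 16) := by
      rw [← Real.exp_add]; congr 1; ring
    have h3 : (rs v r) ^ 4 = y ^ 2 := by rw [hy]; ring
    rw [h3, h2]
    nlinarith [Real.exp_pos (y / 16)]
  calc ∑ r : Fin m → Bool, (rs v r) ^ 4
      ≤ ∑ r : Fin m → Bool, 256 * exp ((1/8) * (rs v r) ^ 2) :=
        Finset.sum_le_sum fun r _ => hpt r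
    _ = 256 * ∑ r : Fin m → Bool, exp ((1/8) * (rs v r) ^ 2) := by rw [← Finset.mul_sum]
    _ ≤ 256 * (2 ^ m * Real.sqrt (1 / (1 - 2 * (1/8)))) := by
        have := sum_exp_sq v hv (by norm_num : (0:ℝ) ≤ 1/8) (by norm_num)
        linarith
    _ ≤ 300 * 2 ^ m := by
        have hs : Real.sqrt (1 / (1 - 2 * (1/8))) ≤ 7/6 := by
          rw [show (1:ℝ) / (1 - 2 * (1/8)) = 4/3 by norm_num]
          have : ((7:ℝ)/6) = Real.sqrt ((7/6)^2) := (Real.sqrt_sq (by norm_num)).symm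
          rw [this]
          exact Real.sqrt_le_sqrt (by norm_num)
        have h2 : (0:ℝ) < 2 ^ m := by positivity
        nlinarith
/-- lower MGF bound -/
lemma mgf_low (v : Fin m → ℝ) (hv : ∑ j, v j ^ 2 = 1) {l : ℝ} (hl0 : 0 ≤ l) :
    ∑ r : Fin m → Bool, exp (-(l * (rs v r) ^ 2)) ≤ 2 ^ m * exp (-l + 300 * l ^ 2) := by
  have hpt : ∀ r : Fin m → Bool,
      exp (-(l * (rs v r) ^ 2)) ≤ 1 - l * (rs v r) ^ 2 + l ^ 2 * (rs v r) ^ 4 := by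
    intro r
    set x := l * (rs v r) ^ 2 with hx
    have hx0 : 0 ≤ x := mul_nonneg hl0 (sq_nonneg _)
    have h4 : exp (-x) * exp x = 1 := by rw [← Real.exp_add]; simp
    have hq : (0:ℝ) ≤ 1 - x + x ^ 2 := by nlinarith [sq_nonneg (x - 1/2)]
    have h5 : l ^ 2 * (rs v r) ^ 4 = x ^ 2 := by rw [hx]; ring
    rw [h5]
    nlinarith [Real.add_one_le_exp x, Real.exp_pos x, Real.exp_pos (-x),
      mul_nonneg hq (sub_nonneg.mpr (by linarith [Real.add_one_le_exp x] : x + 1 ≤ exp x))]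
  calc ∑ r : Fin m → Bool, exp (-(l * (rs v r) ^ 2))
      ≤ ∑ r : Fin m → Bool, (1 - l * (rs v r) ^ 2 + l ^ 2 * (rs v r) ^ 4) :=
        Finset.sum_le_sum fun r _ => hpt r
    _ = 2 ^ m - l * (2 ^ m * ∑ j, v j ^ 2) + l ^ 2 * ∑ r : Fin m → Bool, (rs v r) ^ 4 := by
        rw [Finset.sum_add_distrib, Finset.sum_sub_distrib, Finset.sum_const, card_univ,
          ← Finset.mul_sum, ← Finset.mul_sum, sum_sq v]
        simp [Fintype.card_fun]
    _ ≤ 2 ^ m * (1 - l + 300 * l ^ 2) := by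
        rw [hv, mul_one]
        have h6 := sum_fourth v hv
        have h2 : (0:ℝ) < 2 ^ m := by positivity
        nlinarith [sq_nonneg l]
    _ ≤ 2 ^ m * exp (-l + 300 * l ^ 2) := by
        have h7 := Real.add_one_le_exp (-l + 300 * l ^ 2)
        have h2 : (0:ℝ) ≤ 2 ^ m := by positivity
        nlinarith


variable {m' : ℕ}

def F (v : Fin m → ℝ) (ω : Fin m' → Fin m → Bool) : ℝ := ∑ i, (rs v (ω i)) ^ 2

lemma chernoff_sum (c : ℝ) (v : Fin m → ℝ) :
    ∑ ω : Fin m' → Fin m → Bool, exp (c * F v ω)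
      = (∑ r : Fin m → Bool, exp (c * (rs v r) ^ 2)) ^ m' := by
  have h1 : ∀ ω : Fin m' → Fin m → Bool, exp (c * F v ω)
      = ∏ i, exp (c * (rs v (ω i)) ^ 2) := by
    intro ω; rw [F, Finset.mul_sum, Real.exp_sum]
  rw [Finset.sum_congr rfl fun ω _ => h1 ω,
    sum_pi_prod (fun (_ : Fin m') (r : Fin m → Bool) => exp (c * (rs v r) ^ 2)),
    Finset.prod_const, card_univ, Fintype.card_fin]

lemma pair_count (v : Fin m → ℝ) (hv : ∑ j, v j ^ 2 = 1) {ε : ℝ} (hε : 0 < ε)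
    (hε2 : ε < 1/2) (m' : ℕ) :
    ∑ ω : Fin m' → Fin m → Bool,
        (if ¬((1-ε) * m' ≤ F v ω ∧ F v ω ≤ (1+ε) * m') then (1:ℝ) else 0)
      ≤ 2 ^ (m * m') * (2 * exp (-(m' * ε ^ 2) / 1200)) := by
  have h2m : (0:ℝ) ≤ 2 ^ m := by positivity
  set l1 : ℝ := ε/8 with hl1
  set l2 : ℝ := ε/600 with hl2
  have hind : ∀ ω : Fin m' → Fin m → Bool,
      (if ¬((1-ε) * m' ≤ F v ω ∧ F v ω ≤ (1+ε) * m') then (1:ℝ) else 0)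
      ≤ exp (l1 * (F v ω - (1+ε) * m')) + exp (l2 * ((1-ε) * m' - F v ω)) := by
    intro ω
    by_cases h : (1-ε) * m' ≤ F v ω ∧ F v ω ≤ (1+ε) * m'
    · rw [if_neg (not_not_intro h)]; positivity
    · rw [if_pos h]
      rw [not_and_or] at h
      rcases h with h | h
      · push_neg at h
        have h0 : (0:ℝ) ≤ l2 * ((1-ε) * m' - F v ω) :=
          mul_nonneg (by positivity) (by linarith)
        have h1 := Real.one_le_exp h0
        linarith [Real.exp_pos (l1 * (F v ω - (1+ε) * m'))]
      · push_neg at h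
        have h0 : (0:ℝ) ≤ l1 * (F v ω - (1+ε) * m') :=
          mul_nonneg (by positivity) (by linarith)
        have h1 := Real.one_le_exp h0
        linarith [Real.exp_pos (l2 * ((1-ε) * m' - F v ω))]
  have hup : ∑ ω : Fin m' → Fin m → Bool, exp (l1 * (F v ω - (1+ε) * m'))
      ≤ 2 ^ (m * m') * exp (-(m' * ε ^ 2) / 16) := by
    have hsplit : ∀ ω : Fin m' → Fin m → Bool, exp (l1 * (F v ω - (1+ε) * m'))
        = exp (l1 * F v ω) * exp (-(l1 * ((1+ε) * m'))) := by
      intro ω; rw [← Real.exp_add]; congr 1; ring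
    rw [Finset.sum_congr rfl fun ω _ => hsplit ω, ← Finset.sum_mul, chernoff_sum]
    have hl1le : l1 ≤ 1/8 := by rw [hl1]; linarith
    have hbase : (0:ℝ) ≤ ∑ r : Fin m → Bool, exp (l1 * (rs v r) ^ 2) :=
      Finset.sum_nonneg fun r _ => (Real.exp_pos _).le
    have hpow : (∑ r : Fin m → Bool, exp (l1 * (rs v r) ^ 2)) ^ m'
        ≤ (2 ^ m * exp (l1 + 4 * l1 ^ 2)) ^ m' :=
      pow_le_pow_left₀ hbase (mgf_up v hv (by positivity) hl1le) m'
    calc (∑ r : Fin m → Bool, exp (l1 * (rs v r) ^ 2)) ^ m' * exp (-(l1 * ((1+ε) * m')))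
        ≤ (2 ^ m * exp (l1 + 4 * l1 ^ 2)) ^ m' * exp (-(l1 * ((1+ε) * m'))) :=
          mul_le_mul_of_nonneg_right hpow (Real.exp_pos _).le
      _ = 2 ^ (m * m') * exp (-(m' * ε ^ 2) / 16) := by
          rw [mul_pow, ← pow_mul, ← Real.exp_nat_mul, mul_assoc, ← Real.exp_add]
          congr 2
          rw [hl1]; ring
  have hlow : ∑ ω : Fin m' → Fin m → Bool, exp (l2 * ((1-ε) * m' - F v ω))
      ≤ 2 ^ (m * m') * exp (-(m' * ε ^ 2) / 1200) := by
    have hsplit : ∀ ω : Fin m' → Fin m → Bool, exp (l2 * ((1-ε) * m' - F v ω))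
        = exp ((-l2) * F v ω) * exp (l2 * ((1-ε) * m')) := by
      intro ω; rw [← Real.exp_add]; congr 1; ring
    rw [Finset.sum_congr rfl fun ω _ => hsplit ω, ← Finset.sum_mul, chernoff_sum]
    have hbase : (0:ℝ) ≤ ∑ r : Fin m → Bool, exp ((-l2) * (rs v r) ^ 2) :=
      Finset.sum_nonneg fun r _ => (Real.exp_pos _).le
    have hmgf : ∑ r : Fin m → Bool, exp ((-l2) * (rs v r) ^ 2)
        ≤ 2 ^ m * exp (-l2 + 300 * l2 ^ 2) := by
      have := mgf_low v hv (l := l2) (by positivity)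
      simpa [neg_mul] using this
    have hpow : (∑ r : Fin m → Bool, exp ((-l2) * (rs v r) ^ 2)) ^ m'
        ≤ (2 ^ m * exp (-l2 + 300 * l2 ^ 2)) ^ m' :=
      pow_le_pow_left₀ hbase hmgf m'
    calc (∑ r : Fin m → Bool, exp ((-l2) * (rs v r) ^ 2)) ^ m' * exp (l2 * ((1-ε) * m'))
        ≤ (2 ^ m * exp (-l2 + 300 * l2 ^ 2)) ^ m' * exp (l2 * ((1-ε) * m')) :=
          mul_le_mul_of_nonneg_right hpow (Real.exp_pos _).le
      _ = 2 ^ (m * m') * exp (-(m' * ε ^ 2) / 1200) := by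
          rw [mul_pow, ← pow_mul, ← Real.exp_nat_mul, mul_assoc, ← Real.exp_add]
          congr 2
          rw [hl2]; ring
  calc ∑ ω : Fin m' → Fin m → Bool,
        (if ¬((1-ε) * m' ≤ F v ω ∧ F v ω ≤ (1+ε) * m') then (1:ℝ) else 0)
      ≤ ∑ ω : Fin m' → Fin m → Bool,
          (exp (l1 * (F v ω - (1+ε) * m')) + exp (l2 * ((1-ε) * m' - F v ω))) :=
        Finset.sum_le_sum fun ω _ => hind ω
    _ = (∑ ω : Fin m' → Fin m → Bool, exp (l1 * (F v ω - (1+ε) * m')))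
        + ∑ ω : Fin m' → Fin m → Bool, exp (l2 * ((1-ε) * m' - F v ω)) :=
        Finset.sum_add_distrib
    _ ≤ 2 ^ (m * m') * exp (-(m' * ε ^ 2) / 16) + 2 ^ (m * m') * exp (-(m' * ε ^ 2) / 1200) :=
        add_le_add hup hlow
    _ ≤ 2 ^ (m * m') * (2 * exp (-(m' * ε ^ 2) / 1200)) := by
        have hmono : exp (-(m' * ε ^ 2) / 16) ≤ exp (-(m' * ε ^ 2) / 1200) := by
          apply Real.exp_le_exp.mpr
          have : (0:ℝ) ≤ (m' : ℝ) * ε ^ 2 := by positivity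
          linarith
        have h2mm : (0:ℝ) ≤ 2 ^ (m * m') := by positivity
        nlinarith


lemma norm_sq_eq {k : ℕ} (x : EuclideanSpace ℝ (Fin k)) : ‖x‖ ^ 2 = ∑ i, (x i) ^ 2 := by
  rw [EuclideanSpace.norm_eq, Real.sq_sqrt (Finset.sum_nonneg fun i _ => by positivity)]
  exact Finset.sum_congr rfl fun i _ => by rw [Real.norm_eq_abs, sq_abs]

def Tmap (m m' : ℕ) (ω : Fin m' → Fin m → Bool) (c : ℝ) :
    EuclideanSpace ℝ (Fin m) →ₗ[ℝ] EuclideanSpace ℝ (Fin m') where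
  toFun u := WithLp.toLp 2 (fun i => c * ∑ j, sgn (ω i j) * u j)
  map_add' u w := by
    ext i
    simp only [PiLp.toLp_apply, PiLp.add_apply, mul_add, Finset.sum_add_distrib]
  map_smul' a u := by
    ext i
    simp only [PiLp.toLp_apply, PiLp.smul_apply, smul_eq_mul, RingHom.id_apply]
    have h : ∑ j, sgn (ω i j) * (a * u j) = a * ∑ j, sgn (ω i j) * u j := by
      rw [Finset.mul_sum]
      exact Finset.sum_congr rfl fun j _ => by ring
    rw [h]; ring

lemma Tmap_apply (ω : Fin m' → Fin m → Bool) (c : ℝ) (u : EuclideanSpace ℝ (Fin m))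
    (i : Fin m') : Tmap m m' ω c u i = c * ∑ j, sgn (ω i j) * u j := rfl

lemma norm_Tmap_sq (ω : Fin m' → Fin m → Bool) (c : ℝ) (u : EuclideanSpace ℝ (Fin m)) :
    ‖Tmap m m' ω c u‖ ^ 2 = c ^ 2 * ∑ i, (∑ j, sgn (ω i j) * u j) ^ 2 := by
  rw [norm_sq_eq, Finset.mul_sum]
  exact Finset.sum_congr rfl fun i _ => by rw [Tmap_apply]; ring


end JL


open JL in
/-- The Johnson–Lindenstrauss Lemma. -/
theorem johnson_lindenstrauss :
    ∃ C : ℝ, 0 < C ∧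
      ∀ (ε : ℝ), 0 < ε → ε < 1 / 2 →
      ∀ (m : ℕ) (S : Finset (EuclideanSpace ℝ (Fin m))) (n : ℕ), S.card = n →
      ∀ m' : ℕ, C * Real.log n / ε ^ 2 ≤ (m' : ℝ) →
      ∃ T : EuclideanSpace ℝ (Fin m) →ₗ[ℝ] EuclideanSpace ℝ (Fin m'),
        ∀ x ∈ S, ∀ y ∈ S,
          (1 - ε) * ‖x - y‖ ≤ ‖T x - T y‖ ∧ ‖T x - T y‖ ≤ (1 + ε) * ‖x - y‖ := by
  refine ⟨12000, by norm_num, ?_⟩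
  intro ε hε hε2 m S n hcard m' hm'
  classical
  by_cases hn : n ≤ 1
  · refine ⟨0, ?_⟩
    intro x hx y hy
    have hxy : x = y := Finset.card_le_one.mp (hcard ▸ hn) x hx y hy
    subst hxy
    simp
  · push_neg at hn
    have hn2 : (2:ℝ) ≤ (n:ℝ) := by exact_mod_cast hn
    have hlogn : 0 < Real.log n := Real.log_pos (by linarith)
    have hε2pos : (0:ℝ) < ε ^ 2 := by positivity
    have hm'pos : (0:ℝ) < (m' : ℝ) := by
      refine lt_of_lt_of_le ?_ hm'
      positivity
    -- the set of distinct pairs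
    set P := (S ×ˢ S).filter (fun p => p.1 ≠ p.2) with hP
    -- unit vectors
    set vp := fun p : EuclideanSpace ℝ (Fin m) × EuclideanSpace ℝ (Fin m) =>
      fun j : Fin m => ‖p.1 - p.2‖⁻¹ * (p.1 - p.2) j with hvp
    have hunit : ∀ p ∈ P, ∑ j, (vp p j) ^ 2 = 1 := by
      intro p hp
      have hne : p.1 ≠ p.2 := (Finset.mem_filter.mp hp).2
      have hnz : ‖p.1 - p.2‖ ≠ 0 := by
        simpa [sub_eq_zero] using hne
      have hsum : ∑ j, ((p.1 - p.2) j) ^ 2 = ‖p.1 - p.2‖ ^ 2 := (norm_sq_eq _).symm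
      calc ∑ j, (vp p j) ^ 2 = ‖p.1 - p.2‖⁻¹ ^ 2 * ∑ j, ((p.1 - p.2) j) ^ 2 := by
            rw [Finset.mul_sum]
            exact Finset.sum_congr rfl fun j _ => by rw [hvp]; ring
        _ = 1 := by
            rw [hsum]
            field_simp
    -- counting
    have hcount : ∑ ω : Fin m' → Fin m → Bool, ∑ p ∈ P,
        (if ¬((1-ε) * m' ≤ F (vp p) ω ∧ F (vp p) ω ≤ (1+ε) * m') then (1:ℝ) else 0)
        < ∑ ω : Fin m' → Fin m → Bool, (1:ℝ) := by
      have hcardΩ : ∑ ω : Fin m' → Fin m → Bool, (1:ℝ) = 2 ^ (m * m') := by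
        rw [Finset.sum_const, card_univ]
        simp [Fintype.card_fun, pow_mul]
      have hswap : ∑ ω : Fin m' → Fin m → Bool, ∑ p ∈ P,
          (if ¬((1-ε) * m' ≤ F (vp p) ω ∧ F (vp p) ω ≤ (1+ε) * m') then (1:ℝ) else 0)
          = ∑ p ∈ P, ∑ ω : Fin m' → Fin m → Bool,
            (if ¬((1-ε) * m' ≤ F (vp p) ω ∧ F (vp p) ω ≤ (1+ε) * m') then (1:ℝ) else 0) :=
        Finset.sum_comm
      rw [hswap, hcardΩ]
      have hbound : ∀ p ∈ P, ∑ ω : Fin m' → Fin m → Bool,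
          (if ¬((1-ε) * m' ≤ F (vp p) ω ∧ F (vp p) ω ≤ (1+ε) * m') then (1:ℝ) else 0)
          ≤ 2 ^ (m * m') * (2 * exp (-(m' * ε ^ 2) / 1200)) :=
        fun p hp => pair_count (vp p) (hunit p hp) hε hε2 m'
      have hPcard : (P.card : ℝ) ≤ (n:ℝ) ^ 2 := by
        have h1 : P.card ≤ (S ×ˢ S).card := Finset.card_filter_le _ _
        have h2 : (S ×ˢ S).card = n * n := by rw [Finset.card_product, hcard]
        have : P.card ≤ n * n := h2 ▸ h1
        calc (P.card : ℝ) ≤ (n * n : ℕ) := by exact_mod_cast this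
          _ = (n:ℝ) ^ 2 := by push_cast; ring
      have hnum : (n:ℝ) ^ 2 * (2 * exp (-(m' * ε ^ 2) / 1200)) < 1 := by
        have h1 : 12000 * Real.log n ≤ (m':ℝ) * ε ^ 2 := by
          have := (div_le_iff₀ hε2pos).mp hm'
          linarith
        have h2 : exp (-(m' * ε ^ 2) / 1200) ≤ exp (-(10 * Real.log n)) := by
          apply Real.exp_le_exp.mpr
          linarith
        have h3 : exp (-(10 * Real.log n)) = ((n:ℝ) ^ (10:ℕ))⁻¹ := by
          rw [show (10:ℝ) * Real.log n = Real.log ((n:ℝ) ^ (10:ℕ)) by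
              rw [Real.log_pow]; push_cast; ring,
            Real.exp_neg, Real.exp_log (by positivity)]
        have h8 : (2:ℝ) ^ 8 ≤ (n:ℝ) ^ 8 := pow_le_pow_left₀ (by norm_num) hn2 8
        have h4 : 2 * (n:ℝ) ^ 2 < (n:ℝ) ^ 10 := by nlinarith [sq_nonneg ((n:ℝ))]
        have h5 : (0:ℝ) < (n:ℝ) ^ (10:ℕ) := by positivity
        calc (n:ℝ) ^ 2 * (2 * exp (-(m' * ε ^ 2) / 1200))
            ≤ (n:ℝ) ^ 2 * (2 * ((n:ℝ) ^ (10:ℕ))⁻¹) := by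
              have := h3 ▸ h2
              nlinarith [Real.exp_pos (-(m' * ε ^ 2) / 1200), sq_nonneg ((n:ℝ))]
          _ < 1 := by
              rw [show (n:ℝ) ^ 2 * (2 * ((n:ℝ) ^ (10:ℕ))⁻¹) = (2 * (n:ℝ)^2) / (n:ℝ)^(10:ℕ) by
                  field_simp]
              rw [div_lt_one h5]
              exact_mod_cast h4
      calc ∑ p ∈ P, ∑ ω : Fin m' → Fin m → Bool,
            (if ¬((1-ε) * m' ≤ F (vp p) ω ∧ F (vp p) ω ≤ (1+ε) * m') then (1:ℝ) else 0)
          ≤ ∑ _p ∈ P, 2 ^ (m * m') * (2 * exp (-(m' * ε ^ 2) / 1200)) :=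
            Finset.sum_le_sum hbound
        _ = P.card * (2 ^ (m * m') * (2 * exp (-(m' * ε ^ 2) / 1200))) := by
            rw [Finset.sum_const, nsmul_eq_mul]
        _ ≤ (n:ℝ)^2 * (2 ^ (m * m') * (2 * exp (-(m' * ε ^ 2) / 1200))) := by
            have hpos : (0:ℝ) ≤ 2 ^ (m * m') * (2 * exp (-(m' * ε ^ 2) / 1200)) := by positivity
            exact mul_le_mul_of_nonneg_right hPcard hpos
        _ < 2 ^ (m * m') := by
            have hpos : (0:ℝ) < 2 ^ (m * m') := by positivity
            nlinarith
    -- extract a good ω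
    obtain ⟨ω, -, hω⟩ := Finset.exists_lt_of_sum_lt hcount
    have hgood : ∀ p ∈ P, (1-ε) * m' ≤ F (vp p) ω ∧ F (vp p) ω ≤ (1+ε) * m' := by
      intro p hp
      by_contra hbad
      have h1 : (1:ℝ) ≤ ∑ p ∈ P,
          (if ¬((1-ε) * m' ≤ F (vp p) ω ∧ F (vp p) ω ≤ (1+ε) * m') then (1:ℝ) else 0) := by
        calc (1:ℝ)
            = (if ¬((1-ε) * m' ≤ F (vp p) ω ∧ F (vp p) ω ≤ (1+ε) * m') then (1:ℝ) else 0) :=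
              (if_pos hbad).symm
          _ ≤ ∑ p ∈ P,
              (if ¬((1-ε) * m' ≤ F (vp p) ω ∧ F (vp p) ω ≤ (1+ε) * m') then (1:ℝ) else 0) :=
              Finset.single_le_sum (f := fun q => (if ¬((1-ε) * (m':ℝ) ≤ F (vp q) ω ∧ F (vp q) ω ≤ (1+ε) * (m':ℝ)) then (1:ℝ) else 0)) (fun q _ => by positivity) hp
      linarith
    -- construct T
    refine ⟨Tmap m m' ω ((Real.sqrt m')⁻¹), ?_⟩
    intro x hx y hy
    by_cases hxy : x = y
    · subst hxy
      simp
    · have hpP : (x, y) ∈ P := by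
        rw [hP, Finset.mem_filter, Finset.mem_product]
        exact ⟨⟨hx, hy⟩, hxy⟩
      obtain ⟨hlow, hup⟩ := hgood (x, y) hpP
      set T := Tmap m m' ω ((Real.sqrt m')⁻¹) with hT
      have hTsub : T x - T y = T (x - y) := (map_sub T x y).symm
      set a := ‖x - y‖ with ha
      have ha0 : 0 < a := by
        rw [ha, norm_pos_iff, sub_ne_zero]
        exact hxy
      -- relate F and the T-norm
      have hrs : ∀ i, ∑ j, sgn (ω i j) * (x - y) j = a * rs (vp (x, y)) (ω i) := by
        intro i
        rw [rs, Finset.mul_sum]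
        refine Finset.sum_congr rfl fun j _ => ?_
        rw [hvp]
        simp only
        field_simp
        rw [← ha, mul_div_assoc, div_self ha0.ne', mul_one]
      have hm'ne : (m':ℝ) ≠ 0 := ne_of_gt hm'pos
      have hb : (0:ℝ) ≤ (m':ℝ)⁻¹ := by positivity
      have hnormsq : ‖T (x - y)‖ ^ 2 = (m' : ℝ)⁻¹ * (a ^ 2 * F (vp (x, y)) ω) := by
        rw [hT, norm_Tmap_sq]
        have h1 : ((Real.sqrt m')⁻¹) ^ 2 = (m' : ℝ)⁻¹ := by
          rw [← Real.sqrt_inv, Real.sq_sqrt (by positivity)]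
        have h2 : ∑ i, (∑ j, sgn (ω i j) * (x - y) j) ^ 2 = a ^ 2 * F (vp (x, y)) ω := by
          rw [F, Finset.mul_sum]
          refine Finset.sum_congr rfl fun i _ => ?_
          rw [hrs i]
          ring
        rw [h1, h2]
      have hFl : (1-ε) * a ^ 2 ≤ ‖T (x - y)‖ ^ 2 := by
        rw [hnormsq]
        have h3 : (m':ℝ)⁻¹ * (a ^ 2 * ((1-ε) * m')) ≤ (m':ℝ)⁻¹ * (a ^ 2 * F (vp (x, y)) ω) :=
          mul_le_mul_of_nonneg_left (mul_le_mul_of_nonneg_left hlow (sq_nonneg a)) hb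
        have h4 : (m':ℝ)⁻¹ * (a ^ 2 * ((1-ε) * m')) = (1-ε) * a ^ 2 := by
          field_simp
        linarith
      have hFu : ‖T (x - y)‖ ^ 2 ≤ (1+ε) * a ^ 2 := by
        rw [hnormsq]
        have h3 : (m':ℝ)⁻¹ * (a ^ 2 * F (vp (x, y)) ω) ≤ (m':ℝ)⁻¹ * (a ^ 2 * ((1+ε) * m')) :=
          mul_le_mul_of_nonneg_left (mul_le_mul_of_nonneg_left hup (sq_nonneg a)) hb
        have h4 : (m':ℝ)⁻¹ * (a ^ 2 * ((1+ε) * m')) = (1+ε) * a ^ 2 := by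
          field_simp
        linarith
      constructor
      · rw [hTsub]
        have h2 : ((1-ε) * a) ^ 2 ≤ ‖T (x - y)‖ ^ 2 := by
          have hε1 : (0:ℝ) ≤ 1 - ε := by linarith
          nlinarith [ha0.le]
        calc (1-ε) * a = Real.sqrt (((1-ε) * a) ^ 2) := by
              rw [Real.sqrt_sq (by nlinarith [ha0.le])]
          _ ≤ Real.sqrt (‖T (x - y)‖ ^ 2) := Real.sqrt_le_sqrt h2
          _ = ‖T (x - y)‖ := Real.sqrt_sq (norm_nonneg _)
      · rw [hTsub]
        have h2 : ‖T (x - y)‖ ^ 2 ≤ ((1+ε) * a) ^ 2 := by nlinarith [ha0.le]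
        calc ‖T (x - y)‖ = Real.sqrt (‖T (x - y)‖ ^ 2) := (Real.sqrt_sq (norm_nonneg _)).symm
          _ ≤ Real.sqrt (((1+ε) * a) ^ 2) := Real.sqrt_le_sqrt h2
          _ = (1+ε) * a := Real.sqrt_sq (by nlinarith [ha0.le])
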